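/- arXiv:2002.10730 — 3 statements merged into one kernel-verified Lean document; each statement's English description precedes it below -/
import Mathlib

section
/- Support condition for invertibility of the restricted geometry: for every point x in the simplex K = {x ∈ [0,1]³ : x₁ + x₂ + x₃ ≤ 1, x₁, x₂, x₃ ≥ 0} and every plane H ⊂ ℝ³ passing through x, the plane H intersects the set Ξ = Ξ₁ ∪ Ξ₂ ∪ Ξ₃, where Ξ₁ = {(t,0,0) : t ∈ [0,1]}, Ξ₂ = {(0,t,0) : t ∈ [0,1]}, Ξ₃ = {(0,0,t) : t ∈ [0,1]}. -/
open MeasureTheory Metric Set Filter Real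

noncomputable section

/-- Points of three-dimensional Euclidean space given by coordinates. -/
def pt (a b c : ℝ) : EuclideanSpace ℝ (Fin 3) :=
  (WithLp.equiv 2 (Fin 3 → ℝ)).symm ![a, b, c]

/-- The weighted ray transform `P_k f(u, w) = ∫₀^∞ f(u + r w) r^k dr`. -/
def rayT (k : ℕ) (f : EuclideanSpace ℝ (Fin 3) → ℝ)
    (u w : EuclideanSpace ℝ (Fin 3)) : ℝ :=
  ∫ r in Set.Ioi (0:ℝ), f (u + r • w) * r ^ k

/-- The simplex `K = {x ∈ [0,1]³ : x₁ + x₂ + x₃ ≤ 1}`. -/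
def simplexK : Set (EuclideanSpace ℝ (Fin 3)) :=
  {x | (∀ i, x i ∈ Set.Icc (0:ℝ) 1) ∧ x 0 + x 1 + x 2 ≤ 1}

/-- The triple line vertex set `Ξ = Ξ₁ ∪ Ξ₂ ∪ Ξ₃`. -/
def Xi : Set (EuclideanSpace ℝ (Fin 3)) :=
  {y | ∃ t ∈ Set.Icc (0:ℝ) 1, y = pt t 0 0} ∪
  {y | ∃ t ∈ Set.Icc (0:ℝ) 1, y = pt 0 t 0} ∪
  {y | ∃ t ∈ Set.Icc (0:ℝ) 1, y = pt 0 0 t}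

/-- The conical Radon transform, defined via the circle-integral (coarea)
interpretation of the delta-function definition. -/
def conicalT (k : ℕ) (f : EuclideanSpace ℝ (Fin 3) → ℝ)
    (u β : EuclideanSpace ℝ (Fin 3)) (s : ℝ) : ℝ :=
  (Real.sqrt (1 - s^2))⁻¹ *
    ∫ α in {α : EuclideanSpace ℝ (Fin 3) | ‖α‖ = 1 ∧ (inner ℝ α β : ℝ) = s},
      rayT k f u α ∂(μH[1])

lemma aux_div (a c : ℝ) (h1 : 0 < c) (h2 : c ≤ a) :
    ∃ t ∈ Set.Icc (0:ℝ) 1, t * a = c := by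
  have ha : 0 < a := lt_of_lt_of_le h1 h2
  exact ⟨c / a, ⟨div_nonneg h1.le ha.le, (div_le_one ha).2 h2⟩,
    div_mul_cancel₀ c ha.ne'⟩

/-- every plane through a point of the simplex `K` meets the
vertex set `Ξ`. -/
theorem plane_through_simplex_meets_Xi (x : EuclideanSpace ℝ (Fin 3))
    (hx : x ∈ simplexK) (n : EuclideanSpace ℝ (Fin 3)) (hn : n ≠ 0) :
    ∃ y ∈ Xi, (inner ℝ (y - x) n : ℝ) = 0 := by
  obtain ⟨hx1, hx2⟩ := hx
  have h0 := hx1 0; have h1 := hx1 1; have h2 := hx1 2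
  simp only [Set.mem_Icc] at h0 h1 h2
  set c : ℝ := x 0 * n 0 + x 1 * n 1 + x 2 * n 2 with hc
  have hinner : (inner ℝ x n : ℝ) = c := by
    simp [PiLp.inner_apply, Fin.sum_univ_three, RCLike.inner_apply, hc, mul_comm]
  have main : ∃ i : Fin 3, ∃ t ∈ Set.Icc (0:ℝ) 1, t * n i = c := by
    rcases lt_trichotomy c 0 with hlt | heq | hgt
    · -- c < 0 : use the minimal coordinate
      set m : ℝ := min (n 0) (min (n 1) (n 2)) with hm
      have hm0 : m ≤ n 0 := min_le_left _ _
      have hm1 : m ≤ n 1 := le_trans (min_le_right _ _) (min_le_left _ _)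
      have hm2 : m ≤ n 2 := le_trans (min_le_right _ _) (min_le_right _ _)
      have hmneg : m < 0 := by nlinarith
      have hmc : m ≤ c := by nlinarith
      obtain ⟨t, ht, htm⟩ := aux_div (-m) (-c) (by linarith) (by linarith)
      have hcase : m = n 0 ∨ m = n 1 ∨ m = n 2 := by
        rcases min_choice (n 0) (min (n 1) (n 2)) with h | h
        · exact Or.inl h
        · rcases min_choice (n 1) (n 2) with h' | h'
          · exact Or.inr (Or.inl (h.trans h'))
          · exact Or.inr (Or.inr (h.trans h'))
      rcases hcase with h | h | h
      · exact ⟨0, t, ht, by rw [← h]; linarith⟩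
      · exact ⟨1, t, ht, by rw [← h]; linarith⟩
      · exact ⟨2, t, ht, by rw [← h]; linarith⟩
    · exact ⟨0, 0, ⟨le_refl _, zero_le_one⟩, by rw [heq]; ring⟩
    · -- c > 0 : use the maximal coordinate
      set M : ℝ := max (n 0) (max (n 1) (n 2)) with hM
      have hM0 : n 0 ≤ M := le_max_left _ _
      have hM1 : n 1 ≤ M := le_trans (le_max_left _ _) (le_max_right _ _)
      have hM2 : n 2 ≤ M := le_trans (le_max_right _ _) (le_max_right _ _)
      have hMpos : 0 < M := by nlinarith
      have hMc : c ≤ M := by nlinarith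
      obtain ⟨t, ht, htm⟩ := aux_div M c hgt hMc
      have hcase : M = n 0 ∨ M = n 1 ∨ M = n 2 := by
        rcases max_choice (n 0) (max (n 1) (n 2)) with h | h
        · exact Or.inl h
        · rcases max_choice (n 1) (n 2) with h' | h'
          · exact Or.inr (Or.inl (h.trans h'))
          · exact Or.inr (Or.inr (h.trans h'))
      rcases hcase with h | h | h
      · exact ⟨0, t, ht, by rw [← h]; linarith⟩
      · exact ⟨1, t, ht, by rw [← h]; linarith⟩
      · exact ⟨2, t, ht, by rw [← h]; linarith⟩
  obtain ⟨i, t, ht, hti⟩ := main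
  fin_cases i
  · refine ⟨pt t 0 0, Or.inl (Or.inl ⟨t, ht, rfl⟩), ?_⟩
    have hy : (inner ℝ (pt t 0 0) n : ℝ) = t * n 0 := by
      simp [pt, PiLp.inner_apply, Fin.sum_univ_three, RCLike.inner_apply, mul_comm]
    rw [inner_sub_left, hy, hinner, sub_eq_zero]
    simpa using hti
  · refine ⟨pt 0 t 0, Or.inl (Or.inr ⟨t, ht, rfl⟩), ?_⟩
    have hy : (inner ℝ (pt 0 t 0) n : ℝ) = t * n 1 := by
      simp [pt, PiLp.inner_apply, Fin.sum_univ_three, RCLike.inner_apply, mul_comm]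
    rw [inner_sub_left, hy, hinner, sub_eq_zero]
    simpa using hti
  · refine ⟨pt 0 0 t, Or.inr ⟨t, ht, rfl⟩, ?_⟩
    have hy : (inner ℝ (pt 0 0 t) n : ℝ) = t * n 2 := by
      simp [pt, PiLp.inner_apply, Fin.sum_univ_three, RCLike.inner_apply, mul_comm]
    rw [inner_sub_left, hy, hinner, sub_eq_zero]
    simpa using hti
end
end

section
/- For any point x in the open simplex {x : x₁, x₂, x₃ > 0, x₁+x₂+x₃ < 1} and any unit vector n ∈ S², the set Ξ ∩ {y ∈ ℝ³ : (x − y)·n = 0} is nonempty, where Ξ is the union of the three unit coordinate segments; hence a choice function Λ(x, n) picking a point of this intersection exists. -/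
open MeasureTheory Metric Set Filter Real

noncomputable section

/-- If `n0` is the largest component and the weighted sum is nonnegative,
then `t = d / n0 ∈ [0,1]` works. -/
lemma pick_max (x0 x1 x2 n0 n1 n2 : ℝ) (h0 : 0 < x0) (h1 : 0 < x1) (h2 : 0 < x2)
    (hs : x0 + x1 + x2 < 1) (hn : n0 ^ 2 + n1 ^ 2 + n2 ^ 2 = 1)
    (hd : 0 ≤ x0 * n0 + x1 * n1 + x2 * n2) (hm1 : n1 ≤ n0) (hm2 : n2 ≤ n0) :
    ∃ t : ℝ, 0 ≤ t ∧ t ≤ 1 ∧ t * n0 = x0 * n0 + x1 * n1 + x2 * n2 := by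
  set d := x0 * n0 + x1 * n1 + x2 * n2 with hdef
  have hn0 : 0 < n0 := by
    by_contra h
    push_neg at h
    have hn1 : n1 ≤ 0 := le_trans hm1 h
    have hn2 : n2 ≤ 0 := le_trans hm2 h
    have e0 : x0 * n0 ≤ 0 := mul_nonpos_of_nonneg_of_nonpos h0.le h
    have e1 : x1 * n1 ≤ 0 := mul_nonpos_of_nonneg_of_nonpos h1.le hn1
    have e2 : x2 * n2 ≤ 0 := mul_nonpos_of_nonneg_of_nonpos h2.le hn2
    have z0 : x0 * n0 = 0 := by linarith
    have z1 : x1 * n1 = 0 := by linarith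
    have z2 : x2 * n2 = 0 := by linarith
    have n0z : n0 = 0 := by
      rcases mul_eq_zero.mp z0 with h' | h'
      · exact absurd h' h0.ne'
      · exact h'
    have n1z : n1 = 0 := by
      rcases mul_eq_zero.mp z1 with h' | h'
      · exact absurd h' h1.ne'
      · exact h'
    have n2z : n2 = 0 := by
      rcases mul_eq_zero.mp z2 with h' | h'
      · exact absurd h' h2.ne'
      · exact h'
    rw [n0z, n1z, n2z] at hn
    norm_num at hn
  have hdle : d ≤ n0 := by
    have b1 : x1 * n1 ≤ x1 * n0 := mul_le_mul_of_nonneg_left hm1 h1.le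
    have b2 : x2 * n2 ≤ x2 * n0 := mul_le_mul_of_nonneg_left hm2 h2.le
    have b3 : (x0 + x1 + x2) * n0 < 1 * n0 := mul_lt_mul_of_pos_right hs hn0
    nlinarith
  refine ⟨d / n0, div_nonneg hd hn0.le, ?_, ?_⟩
  · exact (div_le_one hn0).mpr hdle
  · field_simp

/-- Core arithmetic existence for the nonnegative-inner-product half. -/
lemma half (x0 x1 x2 n0 n1 n2 : ℝ) (h0 : 0 < x0) (h1 : 0 < x1) (h2 : 0 < x2)
    (hs : x0 + x1 + x2 < 1) (hn : n0 ^ 2 + n1 ^ 2 + n2 ^ 2 = 1)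
    (hd : 0 ≤ x0 * n0 + x1 * n1 + x2 * n2) :
    ∃ i : Fin 3, ∃ t : ℝ, 0 ≤ t ∧ t ≤ 1 ∧
      t * ![n0, n1, n2] i = x0 * n0 + x1 * n1 + x2 * n2 := by
  rcases le_total n1 n0 with h01 | h01
  · rcases le_total n2 n0 with h02 | h02
    · obtain ⟨t, ht0, ht1, ht⟩ := pick_max x0 x1 x2 n0 n1 n2 h0 h1 h2 hs hn hd h01 h02
      exact ⟨0, t, ht0, ht1, by simpa using ht⟩
    · -- n2 is max
      obtain ⟨t, ht0, ht1, ht⟩ := pick_max x2 x1 x0 n2 n1 n0 h2 h1 h0 (by linarith)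
        (by linarith) (by linarith) (le_trans h01 h02) h02
      exact ⟨2, t, ht0, ht1, by simp; linarith⟩
  · rcases le_total n2 n1 with h12 | h12
    · obtain ⟨t, ht0, ht1, ht⟩ := pick_max x1 x0 x2 n1 n0 n2 h1 h0 h2 (by linarith)
        (by linarith) (by linarith) h01 h12
      exact ⟨1, t, ht0, ht1, by simp; linarith⟩
    · obtain ⟨t, ht0, ht1, ht⟩ := pick_max x2 x1 x0 n2 n1 n0 h2 h1 h0 (by linarith)
        (by linarith) (by linarith) h12 (le_trans h01 h12)
      exact ⟨2, t, ht0, ht1, by simp; linarith⟩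

lemma full (x0 x1 x2 n0 n1 n2 : ℝ) (h0 : 0 < x0) (h1 : 0 < x1) (h2 : 0 < x2)
    (hs : x0 + x1 + x2 < 1) (hn : n0 ^ 2 + n1 ^ 2 + n2 ^ 2 = 1) :
    ∃ i : Fin 3, ∃ t : ℝ, 0 ≤ t ∧ t ≤ 1 ∧
      t * ![n0, n1, n2] i = x0 * n0 + x1 * n1 + x2 * n2 := by
  rcases le_total 0 (x0 * n0 + x1 * n1 + x2 * n2) with hd | hd
  · exact half x0 x1 x2 n0 n1 n2 h0 h1 h2 hs hn hd
  · obtain ⟨i, t, ht0, ht1, ht⟩ := half x0 x1 x2 (-n0) (-n1) (-n2) h0 h1 h2 hs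
      (by ring_nf; linarith) (by linarith)
    refine ⟨i, t, ht0, ht1, ?_⟩
    fin_cases i <;> simp at ht ⊢ <;> linarith

/-- for a point of the open simplex and any unit normal `n`, the plane
through `x` with normal `n` meets `Ξ`; hence a choice function `Λ(x, n)` exists. -/
theorem Xi_inter_plane_nonempty (x : EuclideanSpace ℝ (Fin 3))
    (hx : 0 < x 0 ∧ 0 < x 1 ∧ 0 < x 2 ∧ x 0 + x 1 + x 2 < 1)
    (n : EuclideanSpace ℝ (Fin 3)) (hn : ‖n‖ = 1) :
    (Xi ∩ {y : EuclideanSpace ℝ (Fin 3) | (inner ℝ (x - y) n : ℝ) = 0}).Nonempty := by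
  obtain ⟨hx0, hx1, hx2, hxs⟩ := hx
  have hnsq : n 0 ^ 2 + n 1 ^ 2 + n 2 ^ 2 = 1 := by
    have h := hn
    rw [EuclideanSpace.norm_eq] at h
    have h2 := Real.sqrt_eq_one.mp h
    simpa [Fin.sum_univ_three, Real.norm_eq_abs, sq_abs] using h2
  obtain ⟨i, t, ht0, ht1, ht⟩ := full (x 0) (x 1) (x 2) (n 0) (n 1) (n 2)
    hx0 hx1 hx2 hxs hnsq
  fin_cases i
  · refine ⟨pt t 0 0, Or.inl (Or.inl ⟨t, ⟨ht0, ht1⟩, rfl⟩), ?_⟩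
    have : (inner ℝ (x - pt t 0 0) n : ℝ)
        = (x 0 - t) * n 0 + x 1 * n 1 + x 2 * n 2 := by
      simp [pt, PiLp.inner_apply, Fin.sum_univ_three, RCLike.inner_apply]; ring
    simp only [Set.mem_setOf_eq, this]
    simp at ht
    linarith
  · refine ⟨pt 0 t 0, Or.inl (Or.inr ⟨t, ⟨ht0, ht1⟩, rfl⟩), ?_⟩
    have : (inner ℝ (x - pt 0 t 0) n : ℝ)
        = x 0 * n 0 + (x 1 - t) * n 1 + x 2 * n 2 := by
      simp [pt, PiLp.inner_apply, Fin.sum_univ_three, RCLike.inner_apply]; ring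
    simp only [Set.mem_setOf_eq, this]
    simp at ht
    linarith
  · refine ⟨pt 0 0 t, Or.inr ⟨t, ⟨ht0, ht1⟩, rfl⟩, ?_⟩
    have : (inner ℝ (x - pt 0 0 t) n : ℝ)
        = x 0 * n 0 + x 1 * n 1 + (x 2 - t) * n 2 := by
      simp [pt, PiLp.inner_apply, Fin.sum_univ_three, RCLike.inner_apply]; ring
    simp only [Set.mem_setOf_eq, this]
    simp at ht
    linarith
end
end

section
/- If f : ℝ³ → ℝ is continuous, nonnegative, compactly supported, and C_k f(u, β, s) = 0 for all vertices u ∈ Ξ, all admissible axes β and all s ∈ (−1,1) (equivalently P_k f(u, α) = 0 for all u ∈ Ξ and all α ∈ S²), and supp f ⊆ {x ∈ [0,1]³ : x₁+x₂+x₃ ≤ 1}, then f = 0. -/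
open MeasureTheory Metric Set Filter Real

noncomputable section

lemma ray_vanish (f : EuclideanSpace ℝ (Fin 3) → ℝ) (hf : Continuous f)
    (hpos : ∀ x, 0 ≤ f x) (hsupp : HasCompactSupport f) (k : ℕ)
    (α : EuclideanSpace ℝ (Fin 3)) (hα : ‖α‖ = 1)
    (h : rayT k f 0 α = 0) {r : ℝ} (hr : 0 < r) : f (r • α) = 0 := by
  set g : ℝ → ℝ := fun t => f (t • α) * t ^ k with hg
  have hgc : Continuous g := (hf.comp (continuous_id.smul continuous_const)).mul (continuous_pow k)
  obtain ⟨R, hR⟩ := hsupp.isBounded.subset_closedBall 0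
  have hgs : HasCompactSupport g := by
    apply HasCompactSupport.intro (isCompact_closedBall (0:ℝ) R)
    intro t ht
    have hmem : t • α ∉ tsupport f := by
      intro hmem
      apply ht
      have h2 := hR hmem
      simp only [Metric.mem_closedBall, dist_eq_norm, sub_zero] at h2 ⊢
      rwa [norm_smul, hα, mul_one] at h2
    simp [hg, image_eq_zero_of_notMem_tsupport hmem]
  have hgi : IntegrableOn g (Set.Ioi (0:ℝ)) :=
    (hgc.integrable_of_hasCompactSupport hgs).integrableOn
  have h0 : ∫ t in Set.Ioi (0:ℝ), g t = 0 := by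
    unfold rayT at h; simpa [hg] using h
  have hnn : 0 ≤ᵐ[volume.restrict (Set.Ioi (0:ℝ))] g := by
    filter_upwards [MeasureTheory.ae_restrict_mem measurableSet_Ioi] with t ht
    exact mul_nonneg (hpos _) (pow_nonneg (le_of_lt ht) k)
  have hae : g =ᵐ[volume.restrict (Set.Ioi (0:ℝ))] 0 :=
    (MeasureTheory.setIntegral_eq_zero_iff_of_nonneg_ae hnn hgi).mp h0
  by_contra hne
  have hopen : IsOpen ({t | g t ≠ 0} ∩ Set.Ioi 0) :=
    (isOpen_compl_singleton.preimage hgc).inter isOpen_Ioi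
  have hmeas : volume ({t | g t ≠ 0} ∩ Set.Ioi 0) = 0 := by
    have := ae_iff.mp hae
    rw [Measure.restrict_apply (by
      exact (isOpen_compl_singleton.preimage hgc).measurableSet)] at this
    simpa using this
  have hne' : ({t | g t ≠ 0} ∩ Set.Ioi 0).Nonempty := by
    refine ⟨r, ?_, hr⟩
    simp only [Set.mem_setOf_eq, hg]
    exact mul_ne_zero hne (by positivity)
  exact absurd hmeas (hopen.measure_pos volume hne').ne'

/-- uniqueness: a nonnegative continuous function supported in the
simplex with vanishing ray transforms from all vertices of `Ξ` is identically zero. -/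
theorem rayT_injective_on_simplex (f : EuclideanSpace ℝ (Fin 3) → ℝ)
    (hf : Continuous f) (hpos : ∀ x, 0 ≤ f x) (hsupp : HasCompactSupport f)
    (hK : tsupport f ⊆ simplexK) (k : ℕ)
    (h0 : ∀ u ∈ Xi, ∀ α : EuclideanSpace ℝ (Fin 3), ‖α‖ = 1 → rayT k f u α = 0) :
    f = 0 := by
  have hzero : (0 : EuclideanSpace ℝ (Fin 3)) ∈ Xi := by
    left; left
    refine ⟨0, ⟨le_refl 0, zero_le_one⟩, ?_⟩
    ext i; fin_cases i <;> simp [pt]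
  have hx : ∀ x : EuclideanSpace ℝ (Fin 3), x ≠ 0 → f x = 0 := by
    intro x hx
    have hnx : ‖x‖ ≠ 0 := norm_ne_zero_iff.mpr hx
    set α := ‖x‖⁻¹ • x with hαdef
    have hα : ‖α‖ = 1 := by
      rw [hαdef, norm_smul, norm_inv, norm_norm, inv_mul_cancel₀ hnx]
    have h := ray_vanish f hf hpos hsupp k α hα (h0 0 hzero α hα)
      (r := ‖x‖) (norm_pos_iff.mpr hx)
    rwa [hαdef, smul_inv_smul₀ hnx] at h
  apply Continuous.ext_on (dense_compl_singleton (0 : EuclideanSpace ℝ (Fin 3)))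
    hf continuous_const
  intro x hx'
  exact hx x hx'
end
end
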